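/- Let g(ω) = (3ω-2)·log₂(1-ω) - (2ω-1)·log₂(1-2ω) for 0 ≤ ω < 1/2. Then g(ω) ≥ 0 for all 0 ≤ ω ≤ 1/4. -/

import Mathlib

open Real

private lemma log_aux_deriv_ne (y : ℝ) (hy : y < 1) : (1 : ℝ) - y ≠ 0 := by linarith

private lemma hasDerivAt_log_one_sub (y : ℝ) (hy : y < 1) :
    HasDerivAt (fun t : ℝ => Real.log (1 - t)) (-(1 - y)⁻¹) y := by
  have h1 : HasDerivAt (fun t : ℝ => 1 - t) (-1) y := by
    simpa using (hasDerivAt_id y).const_sub 1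
  have h2 := (Real.hasDerivAt_log (log_aux_deriv_ne y hy)).comp y h1
  simpa [Function.comp_def] using h2

private lemma log_lower (x : ℝ) (h0 : 0 ≤ x) (h1 : x < 1) :
    x + x ^ 2 / 2 + x ^ 3 / 3 ≤ -Real.log (1 - x) := by
  set f : ℝ → ℝ := fun y => -Real.log (1 - y) - y - y ^ 2 / 2 - y ^ 3 / 3 with hf
  have hd : ∀ y : ℝ, y < 1 → HasDerivAt f (y ^ 3 / (1 - y)) y := by
    intro y hy
    have hne := log_aux_deriv_ne y hy
    have h2 := (hasDerivAt_log_one_sub y hy).neg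
    have h3 : HasDerivAt (fun t : ℝ => t ^ 2 / 2) (y) y := by
      simpa using ((hasDerivAt_pow 2 y).div_const 2)
    have h4 : HasDerivAt (fun t : ℝ => t ^ 3 / 3) (y ^ 2) y := by
      simpa using ((hasDerivAt_pow 3 y).div_const 3)
    have h5 := ((h2.sub (hasDerivAt_id y)).sub h3).sub h4
    refine h5.congr_deriv ?_
    field_simp
    ring
  have mono : MonotoneOn f (Set.Icc 0 x) := by
    apply monotoneOn_of_deriv_nonneg (convex_Icc 0 x)
    · intro y hy
      exact (hd y (by rcases hy with ⟨_, hy2⟩; linarith)).continuousAt.continuousWithinAt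
    · intro y hy
      rw [interior_Icc] at hy
      exact (hd y (by linarith [hy.2])).differentiableAt.differentiableWithinAt
    · intro y hy
      rw [interior_Icc] at hy
      obtain ⟨hy1, hy2⟩ := hy
      rw [(hd y (by linarith)).deriv]
      have hpos : (0:ℝ) < 1 - y := by linarith
      positivity
  have h00 : f 0 ≤ f x := mono (by simp [h0]) (by simp [h0]) h0
  simp only [hf] at h00
  norm_num at h00
  linarith [h00]

private lemma log_upper (x : ℝ) (h0 : 0 ≤ x) (h1 : x < 1) :
    -Real.log (1 - x) ≤ x + x ^ 2 / 2 + x ^ 3 / 3 + x ^ 4 / (4 * (1 - x)) := by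
  set f : ℝ → ℝ := fun y => y + y ^ 2 / 2 + y ^ 3 / 3 + y ^ 4 / (4 * (1 - y)) + Real.log (1 - y)
    with hf
  have hd : ∀ y : ℝ, y < 1 → HasDerivAt f (y ^ 4 / (4 * (1 - y) ^ 2)) y := by
    intro y hy
    have hne := log_aux_deriv_ne y hy
    have hne4 : (4 : ℝ) * (1 - y) ≠ 0 := by
      intro h; apply hne; linarith [h]
      
    have h2 := hasDerivAt_log_one_sub y hy
    have h3 : HasDerivAt (fun t : ℝ => t ^ 2 / 2) (y) y := by
      simpa using ((hasDerivAt_pow 2 y).div_const 2)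
    have h4 : HasDerivAt (fun t : ℝ => t ^ 3 / 3) (y ^ 2) y := by
      simpa using ((hasDerivAt_pow 3 y).div_const 3)
    have hnum : HasDerivAt (fun t : ℝ => t ^ 4) (4 * y ^ 3) y := by
      simpa using (hasDerivAt_pow 4 y)
    have hden : HasDerivAt (fun t : ℝ => 4 * (1 - t)) (-4) y := by
      have : HasDerivAt (fun t : ℝ => 1 - t) (-1) y := by
        simpa using (hasDerivAt_id y).const_sub 1
      simpa using this.const_mul 4
    have h5 : HasDerivAt (fun t : ℝ => t ^ 4 / (4 * (1 - t)))
        ((4 * y ^ 3 * (4 * (1 - y)) - y ^ 4 * (-4)) / (4 * (1 - y)) ^ 2) y :=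
      hnum.div hden hne4
    have h6 := ((((hasDerivAt_id y).add h3).add h4).add h5).add h2
    refine h6.congr_deriv ?_
    field_simp
    ring
  have mono : MonotoneOn f (Set.Icc 0 x) := by
    apply monotoneOn_of_deriv_nonneg (convex_Icc 0 x)
    · intro y hy
      exact (hd y (by rcases hy with ⟨_, hy2⟩; linarith)).continuousAt.continuousWithinAt
    · intro y hy
      rw [interior_Icc] at hy
      exact (hd y (by linarith [hy.2])).differentiableAt.differentiableWithinAt
    · intro y hy
      rw [interior_Icc] at hy
      obtain ⟨hy1, hy2⟩ := hy
      rw [(hd y (by linarith)).deriv]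
      positivity
  have h00 : f 0 ≤ f x := mono (by simp [h0]) (by simp [h0]) h0
  simp only [hf] at h00
  norm_num at h00
  linarith [h00]

/-- The function `g(ω) = (3ω-2)·log₂(1-ω) - (2ω-1)·log₂(1-2ω)` is nonnegative
for `0 ≤ ω ≤ 1/4`. -/
theorem g_nonneg (ω : ℝ) (h0 : 0 ≤ ω) (h1 : ω ≤ 1 / 4) :
    0 ≤ (3 * ω - 2) * logb 2 (1 - ω) - (2 * ω - 1) * logb 2 (1 - 2 * ω) := by
  have hω1 : (0 : ℝ) < 1 - ω := by linarith
  have hω2 : (0 : ℝ) < 1 - 2 * ω := by linarith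
  have ha := log_lower ω h0 (by linarith)
  have hb := log_upper (2 * ω) (by linarith) (by linarith)
  have key : 0 ≤ (3 * ω - 2) * Real.log (1 - ω) - (2 * ω - 1) * Real.log (1 - 2 * ω) := by
    set a : ℝ := -Real.log (1 - ω) with hA
    set b : ℝ := -Real.log (1 - 2 * ω) with hB
    have hgoal : (3 * ω - 2) * Real.log (1 - ω) - (2 * ω - 1) * Real.log (1 - 2 * ω)
        = (2 - 3 * ω) * a - (1 - 2 * ω) * b := by
      simp only [hA, hB]; ring
    rw [hgoal]
    have ha' : (2 - 3 * ω) * (ω + ω ^ 2 / 2 + ω ^ 3 / 3) ≤ (2 - 3 * ω) * a :=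
      mul_le_mul_of_nonneg_left ha (by linarith)
    have hb' : (1 - 2 * ω) * b ≤ (1 - 2 * ω) * (2 * ω + 2 * ω ^ 2 + (8 / 3) * ω ^ 3)
        + 4 * ω ^ 4 := by
      have h := mul_le_mul_of_nonneg_left hb (le_of_lt hω2)
      have e : (1 - 2 * ω) * ((2 * ω) + (2 * ω) ^ 2 / 2 + (2 * ω) ^ 3 / 3
          + (2 * ω) ^ 4 / (4 * (1 - 2 * ω)))
          = (1 - 2 * ω) * (2 * ω + 2 * ω ^ 2 + (8 / 3) * ω ^ 3) + 4 * ω ^ 4 := by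
        field_simp
        ring
      rw [e] at h
      linarith [h]
    nlinarith [pow_nonneg h0 3, pow_nonneg h0 4, ha', hb']
  have hlog2 : (0 : ℝ) < Real.log 2 := Real.log_pos (by norm_num)
  have heq : (3 * ω - 2) * logb 2 (1 - ω) - (2 * ω - 1) * logb 2 (1 - 2 * ω)
      = ((3 * ω - 2) * Real.log (1 - ω) - (2 * ω - 1) * Real.log (1 - 2 * ω)) / Real.log 2 := by
    simp only [Real.logb]
    ring
  rw [heq]
  exact div_nonneg key hlog2.le
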